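/- arXiv:1710.01272 — 3 statements merged into one kernel-verified Lean document; each statement's English description precedes it below -/
import Mathlib

section
/- For x > 0 and κ > 0 with κ ≠ 1, the normalized lower incomplete Gamma function satisfies (1 - e^{-p x})^κ < Γ_l(κ, x)/Γ(κ) < (1 - e^{-p̃ x})^κ, where for 0 < κ < 1 one takes p̃ = (Γ(κ+1))^{-1/κ} and p = 1, and for κ > 1 one takes p̃ = 1 and p = (Γ(κ+1))^{-1/κ}. -/
open Real Filter MeasureTheory Set intervalIntegral

noncomputable section AlzerAux

/-- lower incomplete gamma -/
def Gl (κ x : ℝ) : ℝ := ∫ t in (0:ℝ)..x, t ^ (κ - 1) * Real.exp (-t)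

def phi (κ q x : ℝ) : ℝ := Gl κ x - Real.Gamma κ * (1 - Real.exp (-(q*x))) ^ κ

def phi' (κ q x : ℝ) : ℝ :=
  x ^ (κ-1) * Real.exp (-x)
    - Real.Gamma (κ+1) * (q * Real.exp (-(q*x)) * (1 - Real.exp (-(q*x))) ^ (κ-1))

def uu (κ q x : ℝ) : ℝ :=
  (κ-1) * (Real.log x - Real.log (1 - Real.exp (-(q*x)))) + (q-1)*x
    - Real.log (Real.Gamma (κ+1) * q)

def UU (κ q x : ℝ) : ℝ := (κ-1) * (1/x - q/(Real.exp (q*x) - 1)) + (q-1)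

def UU' (κ q x : ℝ) : ℝ :=
  (κ-1) * (q^2 * Real.exp (q*x) / (Real.exp (q*x) - 1)^2 - 1/x^2)

variable {κ q x : ℝ}

lemma exp_qx_gt (hq : 0 < q) (hx : 0 < x) : 1 + q*x < Real.exp (q*x) := by
  have := Real.add_one_lt_exp (x := q*x) (by positivity)
  linarith

lemma one_sub_exp_pos (hq : 0 < q) (hx : 0 < x) : 0 < 1 - Real.exp (-(q*x)) := by
  have : Real.exp (-(q*x)) < 1 := by
    rw [Real.exp_lt_one_iff]; nlinarith
  linarith

/-- generic MVT helper -/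
lemma mvt_gen {f f' : ℝ → ℝ} {a b : ℝ} (hab : a < b)
    (hf : ∀ t ∈ Set.Icc a b, HasDerivAt f (f' t) t) :
    ∃ d ∈ Set.Ioo a b, f b - f a = f' d * (b - a) := by
  obtain ⟨c, hc, hc2⟩ := exists_hasDerivAt_eq_slope f f' hab
    (fun t ht => (hf t ht).continuousAt.continuousWithinAt)
    (fun t ht => hf t (Set.mem_Icc.2 ⟨ht.1.le, ht.2.le⟩))
  refine ⟨c, hc, ?_⟩
  rw [hc2, div_mul_cancel₀]
  exact sub_ne_zero.2 hab.ne' 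

/-- key positivity principle -/
lemma lemA {f f' : ℝ → ℝ}
    (hc : ∀ z, 0 < z → ContinuousOn f (Set.Icc 0 z))
    (h0 : f 0 = 0) (hlim : Tendsto f atTop (nhds 0))
    (hd : ∀ x, 0 < x → HasDerivAt f (f' x) x)
    (hsign : ∀ a b, 0 < a → a < b → f' a ≤ 0 → f' b < 0)
    {z : ℝ} (hz : 0 < z) : 0 < f z := by
  by_cases hpos : ∀ w, 0 < w → w ≤ z → 0 < f' w
  · obtain ⟨c, hc1, hc2⟩ := exists_hasDerivAt_eq_slope f f' hz (hc z hz)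
      (fun t ht => hd t ht.1)
    have hfc : 0 < f' c := hpos c hc1.1 hc1.2.le
    rw [h0, sub_zero, sub_zero] at hc2
    have h2 : 0 < f z / z := by rw [← hc2]; exact hfc
    rcases div_pos_iff.mp h2 with h | h
    · exact h.1
    · linarith [h.2]
  · push_neg at hpos
    obtain ⟨w, hw0, hwz, hw⟩ := hpos
    -- f is strictly decreasing on [w, ∞)
    have anti : ∀ y1 y2, w ≤ y1 → y1 < y2 → f y2 < f y1 := by
      intro y1 y2 h1 h12
      obtain ⟨d, hd1, hd2⟩ := mvt_gen h12 (fun t ht => hd t (lt_of_lt_of_le hw0 (h1.trans ht.1)))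
      have : f' d < 0 := hsign w d hw0 (lt_of_le_of_lt h1 hd1.1) hw
      nlinarith [hd1.1, hd1.2, this]
    have h1 : f (z+1) < f z := anti z (z+1) hwz (by linarith)
    have h2 : 0 ≤ f (z+1) := by
      by_contra h
      push_neg at h
      have ev1 : ∀ᶠ y in atTop, f (z+1) < f y :=
        hlim.eventually (eventually_gt_nhds h)
      have ev2 : ∀ᶠ y in atTop, z+1 < y := eventually_gt_atTop (z+1)
      obtain ⟨y, hy1, hy2⟩ := (ev1.and ev2).exists
      exact absurd hy1 (not_lt.2 (anti (z+1) y (by linarith) hy2).le)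
    linarith

lemma integrand_eq (κ : ℝ) :
    (fun t : ℝ => t ^ (κ-1) * Real.exp (-t)) = fun t => Real.exp (-t) * t ^ (κ-1) :=
  funext fun t => mul_comm _ _

lemma integrableOn_Icc (hκ : 0 < κ) (z : ℝ) :
    IntegrableOn (fun t : ℝ => t ^ (κ-1) * Real.exp (-t)) (Set.Icc 0 z) := by
  rw [integrand_eq, integrableOn_Icc_iff_integrableOn_Ioc]
  exact (Real.GammaIntegral_convergent hκ).mono_set Set.Ioc_subset_Ioi_self

lemma Gl_cont (hκ : 0 < κ) {z : ℝ} (hz : 0 < z) : ContinuousOn (Gl κ) (Set.Icc 0 z) := by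
  have := intervalIntegral.continuousOn_primitive_interval
    (f := fun t : ℝ => t ^ (κ-1) * Real.exp (-t)) (a := 0) (b := z) (μ := volume)
    (by rw [Set.uIcc_of_le hz.le]; exact integrableOn_Icc hκ z)
  rwa [Set.uIcc_of_le hz.le] at this

lemma Gl_tendsto (hκ : 0 < κ) : Tendsto (Gl κ) atTop (nhds (Real.Gamma κ)) := by
  have h := MeasureTheory.intervalIntegral_tendsto_integral_Ioi (μ := volume)
    (b := fun x : ℝ => x) (f := fun t : ℝ => t ^ (κ-1) * Real.exp (-t)) 0
    (by rw [integrand_eq]; exact Real.GammaIntegral_convergent hκ) tendsto_id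
  rw [Real.Gamma_eq_integral hκ]
  unfold Gl
  simpa [mul_comm] using h

lemma hasDerivAt_Gl (hκ : 0 < κ) (hx : 0 < x) :
    HasDerivAt (Gl κ) (x ^ (κ-1) * Real.exp (-x)) x := by
  have hcont : ContinuousAt (fun t : ℝ => t ^ (κ-1) * Real.exp (-t)) x := by
    exact ((Real.continuousAt_rpow_const x (κ-1) (Or.inl hx.ne')).mul
      ((Real.continuous_exp.comp continuous_neg).continuousAt))
  have hint : IntervalIntegrable (fun t : ℝ => t ^ (κ-1) * Real.exp (-t)) volume 0 x := by
    rw [intervalIntegrable_iff, Set.uIoc_of_le hx.le]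
    exact (integrableOn_Icc hκ x).mono_set Set.Ioc_subset_Icc_self
  have hmeas : StronglyMeasurableAtFilter (fun t : ℝ => t ^ (κ-1) * Real.exp (-t))
      (nhds x) volume := by
    refine ContinuousOn.stronglyMeasurableAtFilter isOpen_Ioi ?_ x hx
    intro t ht
    exact ((Real.continuousAt_rpow_const t (κ-1) (Or.inl (ne_of_gt ht))).mul
      ((Real.continuous_exp.comp continuous_neg).continuousAt)).continuousWithinAt
  exact intervalIntegral.integral_hasDerivAt_right hint hmeas hcont


lemma hasDerivAt_v (q : ℝ) (x : ℝ) :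
    HasDerivAt (fun y => 1 - Real.exp (-(q*y))) (q * Real.exp (-(q*x))) x := by
  have h1 : HasDerivAt (fun y : ℝ => q*y) q x := by
    simpa using (hasDerivAt_id x).const_mul q
  have h2 := (h1.neg).exp
  exact ((hasDerivAt_const x (1:ℝ)).sub h2).congr_deriv (by simp; ring)

lemma hasDerivAt_phi (hκ : 0 < κ) (hq : 0 < q) (hx : 0 < x) :
    HasDerivAt (phi κ q) (phi' κ q x) x := by
  have hv := one_sub_exp_pos hq hx (x := x)
  have hB : HasDerivAt (fun y => (1 - Real.exp (-(q*y))) ^ κ)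
      (q * Real.exp (-(q*x)) * κ * (1 - Real.exp (-(q*x))) ^ (κ-1)) x :=
    (hasDerivAt_v q x).rpow_const (Or.inl hv.ne')
  have h := (hasDerivAt_Gl hκ hx).sub (hB.const_mul (Real.Gamma κ))
  have hΓ : Real.Gamma (κ+1) = κ * Real.Gamma κ := Real.Gamma_add_one hκ.ne'
  unfold phi phi'
  refine h.congr_deriv ?_
  rw [hΓ]; ring

lemma uu_eq_log (hκ : 0 < κ) (hq : 0 < q) (hx : 0 < x) :
    uu κ q x = Real.log (x ^ (κ-1) * Real.exp (-x))
      - Real.log (Real.Gamma (κ+1) * (q * Real.exp (-(q*x)) * (1 - Real.exp (-(q*x))) ^ (κ-1))) := by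
  have hv := one_sub_exp_pos hq hx (x := x)
  have hΓ : 0 < Real.Gamma (κ+1) := Real.Gamma_pos_of_pos (by linarith)
  have e1 : Real.log (x ^ (κ-1) * Real.exp (-x)) = (κ-1) * Real.log x - x := by
    rw [Real.log_mul (by positivity) (Real.exp_ne_zero _), Real.log_rpow hx, Real.log_exp]
    ring
  have e2 : Real.log (Real.Gamma (κ+1) * (q * Real.exp (-(q*x)) * (1 - Real.exp (-(q*x))) ^ (κ-1)))
      = Real.log (Real.Gamma (κ+1)) + Real.log q - q*x + (κ-1) * Real.log (1 - Real.exp (-(q*x))) := by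
    rw [Real.log_mul hΓ.ne' (by positivity), Real.log_mul (by positivity) (by positivity),
      Real.log_mul hq.ne' (Real.exp_ne_zero _), Real.log_exp, Real.log_rpow hv]
    ring
  rw [e1, e2]
  unfold uu
  rw [Real.log_mul hΓ.ne' hq.ne']
  ring

lemma phi'_neg_iff (hκ : 0 < κ) (hq : 0 < q) (hx : 0 < x) :
    (phi' κ q x < 0 ↔ uu κ q x < 0) ∧ (0 < phi' κ q x ↔ 0 < uu κ q x) := by
  have hv := one_sub_exp_pos hq hx (x := x)
  have hΓ : 0 < Real.Gamma (κ+1) := Real.Gamma_pos_of_pos (by linarith)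
  have ha : (0:ℝ) < x ^ (κ-1) * Real.exp (-x) := by positivity
  have hb : (0:ℝ) < Real.Gamma (κ+1) * (q * Real.exp (-(q*x)) * (1 - Real.exp (-(q*x))) ^ (κ-1)) := by
    positivity
  rw [uu_eq_log hκ hq hx]
  unfold phi'
  constructor
  · rw [sub_neg, sub_neg, Real.log_lt_log_iff ha hb]
  · rw [sub_pos, sub_pos, Real.log_lt_log_iff hb ha]

lemma hasDerivAt_uu (hq : 0 < q) (hx : 0 < x) :
    HasDerivAt (uu κ q) (UU κ q x) x := by
  have hv := one_sub_exp_pos hq hx (x := x)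
  have hE : 1 < Real.exp (q*x) := by
    rw [← Real.exp_zero]; exact Real.exp_lt_exp.2 (by positivity)
  have h1 : HasDerivAt Real.log x⁻¹ x := Real.hasDerivAt_log hx.ne'
  have h2 : HasDerivAt (fun y => Real.log (1 - Real.exp (-(q*y))))
      (q * Real.exp (-(q*x)) / (1 - Real.exp (-(q*x)))) x :=
    (hasDerivAt_v q x).log hv.ne'
  have h3 := ((h1.sub h2).const_mul (κ-1)).add ((hasDerivAt_id x).const_mul (q-1))
  have h4 := h3.sub_const (Real.log (Real.Gamma (κ+1) * q))
  unfold uu UU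
  refine h4.congr_deriv ?_
  have hid : Real.exp (-(q*x)) = (Real.exp (q*x))⁻¹ := by
    rw [← Real.exp_neg]
  rw [hid]
  have hE0 : Real.exp (q*x) ≠ 0 := Real.exp_ne_zero _
  have hE1 : Real.exp (q*x) - 1 ≠ 0 := by linarith
  have hv' : 1 - (Real.exp (q*x))⁻¹ ≠ 0 := by
    rw [← hid]; exact hv.ne'
  field_simp

lemma hasDerivAt_UU (hq : 0 < q) (hx : 0 < x) :
    HasDerivAt (UU κ q) (UU' κ q x) x := by
  have hE : 1 < Real.exp (q*x) := by
    rw [← Real.exp_zero]; exact Real.exp_lt_exp.2 (by positivity)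
  have hE1 : Real.exp (q*x) - 1 ≠ 0 := by linarith
  have h1 : HasDerivAt (fun y : ℝ => 1/y) (-(1/x^2)) x := by
    simpa [one_div] using hasDerivAt_inv hx.ne'
  have hqx : HasDerivAt (fun y : ℝ => q*y) q x := by
    simpa using (hasDerivAt_id x).const_mul q
  have h2 : HasDerivAt (fun y => Real.exp (q*y) - 1) (Real.exp (q*x) * q) x :=
    (hqx.exp).sub_const 1
  have h3 : HasDerivAt (fun y => q / (Real.exp (q*y) - 1))
      (-(q^2 * Real.exp (q*x) / (Real.exp (q*x) - 1)^2)) x := by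
    have := (h2.inv hE1).const_mul q
    refine this.congr_deriv ?_
    ring
  have h4 := ((h1.sub h3).const_mul (κ-1)).add_const (q-1)
  unfold UU UU'
  refine h4.congr_deriv ?_
  ring

lemma aux_exp_ineq {s : ℝ} (hs : 0 < s) : s^2 * Real.exp s < (Real.exp s - 1)^2 := by
  have h := Real.self_lt_sinh_iff.2 (half_pos hs)
  rw [Real.sinh_eq] at h
  set a := Real.exp (s/2) with ha
  have hab : a * a = Real.exp s := by
    rw [ha, ← Real.exp_add]; ring_nf
  have hinv : Real.exp (-(s/2)) = a⁻¹ := by rw [ha, ← Real.exp_neg]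
  have ha0 : 0 < a := Real.exp_pos _
  rw [hinv] at h
  have key : s < a - a⁻¹ := by linarith
  have h1 : Real.exp s - 1 = a * (a - a⁻¹) := by
    rw [← hab]; field_simp
  rw [h1, ← hab]
  have h2 : 0 < a - a⁻¹ := lt_trans hs key
  nlinarith [mul_pos (mul_pos ha0 ha0)
    (mul_pos (sub_pos.2 key) (by linarith : (0:ℝ) < a - a⁻¹ + s))]

lemma Hterm_neg (hq : 0 < q) (hx : 0 < x) :
    q^2 * Real.exp (q*x) / (Real.exp (q*x) - 1)^2 - 1/x^2 < 0 := by
  have hE : 1 < Real.exp (q*x) := by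
    rw [← Real.exp_zero]; exact Real.exp_lt_exp.2 (by positivity)
  have h := aux_exp_ineq (s := q*x) (by positivity)
  rw [sub_neg, div_lt_div_iff₀ (pow_pos (by linarith : (0:ℝ) < Real.exp (q*x) - 1) 2)
    (by positivity : (0:ℝ) < x^2)]
  calc q^2 * Real.exp (q*x) * x^2 = (q*x)^2 * Real.exp (q*x) := by ring
    _ < (Real.exp (q*x) - 1)^2 := h
    _ = 1 * (Real.exp (q*x) - 1)^2 := (one_mul _).symm

lemma Hpos (hq : 0 < q) (hx : 0 < x) : 0 < 1/x - q/(Real.exp (q*x) - 1) := by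
  have h := exp_qx_gt hq hx (x := x)
  have hE1 : (0:ℝ) < Real.exp (q*x) - 1 := by linarith [hq.le, mul_pos hq hx]
  rw [sub_pos, div_lt_div_iff₀ hE1 hx]
  nlinarith


lemma uu_tendsto (hκ : 0 < κ) (hq : 0 < q)
    (hq1 : Real.Gamma (κ+1) * q ^ κ = 1) :
    Tendsto (uu κ q) (nhdsWithin 0 (Set.Ioi 0)) (nhds 0) := by
  have hΓ : 0 < Real.Gamma (κ+1) := Real.Gamma_pos_of_pos (by linarith)
  have hslope : Tendsto (fun x => (1 - Real.exp (-(q*x))) / x)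
      (nhdsWithin 0 (Set.Ioi 0)) (nhds q) := by
    have h1 : HasDerivAt (fun y : ℝ => q*y) q 0 := by
      simpa using (hasDerivAt_id (0:ℝ)).const_mul q
    have hd : HasDerivAt (fun y => 1 - Real.exp (-(q*y))) q 0 := by
      simpa using ((h1.neg).exp.const_sub 1)
    have h2 := hasDerivAt_iff_tendsto_slope.1 hd
    have h3 := h2.mono_left (nhdsWithin_mono 0 (fun y hy => ne_of_gt hy))
    refine h3.congr (fun y => ?_)
    simp [slope_def_field]
  have hlog : Tendsto (fun x => Real.log ((1 - Real.exp (-(q*x))) / x))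
      (nhdsWithin 0 (Set.Ioi 0)) (nhds (Real.log q)) :=
    (Real.continuousAt_log hq.ne').tendsto.comp hslope
  have hlin : Tendsto (fun x : ℝ => (q-1)*x) (nhdsWithin 0 (Set.Ioi 0)) (nhds 0) := by
    have : Tendsto (fun x : ℝ => (q-1)*x) (nhds 0) (nhds ((q-1)*0)) :=
      (continuous_const.mul continuous_id).tendsto 0
    simpa using this.mono_left nhdsWithin_le_nhds
  have hmain := ((hlog.const_mul (-(κ-1))).add hlin).sub_const
    (Real.log (Real.Gamma (κ+1) * q))
  have hval : -(κ-1) * Real.log q + 0 - Real.log (Real.Gamma (κ+1) * q) = 0 := by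
    have h := congrArg Real.log hq1
    rw [Real.log_mul hΓ.ne' (Real.rpow_pos_of_pos hq κ).ne', Real.log_rpow hq,
      Real.log_one] at h
    rw [Real.log_mul hΓ.ne' hq.ne']
    linarith
  rw [hval] at hmain
  refine hmain.congr' (eventually_nhdsWithin_of_forall (fun y hy => ?_))
  have hy' : (0:ℝ) < y := hy
  have hv := one_sub_exp_pos hq hy' (x := y)
  rw [Real.log_div hv.ne' hy'.ne']
  unfold uu
  ring

lemma uu_eq_mul (hκ : 0 < κ) (hq : 0 < q)
    (hq1 : Real.Gamma (κ+1) * q ^ κ = 1) (hx : 0 < x) :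
    ∃ c ∈ Set.Ioo 0 x, uu κ q x = UU κ q c * x := by
  set f := fun y => if y = 0 then 0 else uu κ q y with hf
  have heq : ∀ t : ℝ, 0 < t → f t = uu κ q t := fun t ht => if_neg (ne_of_gt ht)
  have hev : ∀ t : ℝ, 0 < t → f =ᶠ[nhds t] uu κ q := fun t ht =>
    Filter.eventually_of_mem (isOpen_Ioi.mem_nhds ht) (fun y hy => heq y hy)
  have hcont : ContinuousOn f (Set.Icc 0 x) := by
    intro t ht
    rcases eq_or_lt_of_le ht.1 with h0 | h0
    · subst h0
      have htend : Tendsto f (nhdsWithin 0 (Set.Ici 0)) (nhds 0) := by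
        rw [show Set.Ici (0:ℝ) = insert 0 (Set.Ioi 0) by
            rw [Set.Ioi_insert], nhdsWithin_insert, tendsto_sup]
        constructor
        · rw [tendsto_pure_left]
          intro s hs
          simpa [hf] using mem_of_mem_nhds hs
        · exact (uu_tendsto hκ hq hq1).congr'
            (eventually_nhdsWithin_of_forall (fun y hy => (heq y hy).symm))
      have : ContinuousWithinAt f (Set.Ici 0) 0 := by
        simpa [ContinuousWithinAt, hf] using htend
      exact this.mono Set.Icc_subset_Ici_self
    · exact (((hasDerivAt_uu hq h0).continuousAt.congr (hev t h0).symm)).continuousWithinAt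
  obtain ⟨c, hc, hc2⟩ := exists_hasDerivAt_eq_slope f (UU κ q) hx hcont
    (fun t ht => ((hasDerivAt_uu hq ht.1).congr_of_eventuallyEq (hev t ht.1)))
  refine ⟨c, hc, ?_⟩
  rw [heq x hx, hf] at hc2
  simp only [if_pos rfl, ↓reduceIte, sub_zero] at hc2
  rw [hc2]
  field_simp


lemma phi_zero (hκ : 0 < κ) : phi κ q 0 = 0 := by
  unfold phi Gl
  simp [Real.zero_rpow hκ.ne']

lemma phi_tendsto (hκ : 0 < κ) (hq : 0 < q) :
    Tendsto (phi κ q) atTop (nhds 0) := by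
  have hB : Tendsto (fun x => (1 - Real.exp (-(q*x))) ^ κ) atTop (nhds 1) := by
    have h1 : Tendsto (fun x : ℝ => -(q*x)) atTop atBot :=
      tendsto_neg_atTop_atBot.comp ((tendsto_const_mul_atTop_of_pos hq).2 tendsto_id)
    have h2 : Tendsto (fun x : ℝ => Real.exp (-(q*x))) atTop (nhds 0) :=
      Real.tendsto_exp_atBot.comp h1
    have h3 : Tendsto (fun x : ℝ => 1 - Real.exp (-(q*x))) atTop (nhds 1) := by
      simpa using (tendsto_const_nhds (x := (1:ℝ))).sub h2
    simpa using h3.rpow_const (Or.inl one_ne_zero)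
  have := (Gl_tendsto hκ).sub ((hB.const_mul (Real.Gamma κ)))
  simp only [mul_one, sub_self] at this
  exact this

lemma phi'_nonpos_iff (hκ : 0 < κ) (hq : 0 < q) (hx : 0 < x) :
    (phi' κ q x ≤ 0 ↔ uu κ q x ≤ 0) := by
  have h := phi'_neg_iff hκ hq (x := x) hx
  constructor
  · intro hle
    by_contra hlt
    push_neg at hlt
    exact absurd (h.2.2 hlt) (not_lt.2 hle)
  · intro hle
    by_contra hlt
    push_neg at hlt
    exact absurd (h.2.1 hlt) (not_lt.2 hle)

lemma phi_contOn (hκ : 0 < κ) {z : ℝ} (hz : 0 < z) :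
    ContinuousOn (phi κ q) (Set.Icc 0 z) := by
  have hc1 : Continuous fun y : ℝ => 1 - Real.exp (-(q*y)) := by continuity
  have hc2 := hc1.rpow_const (fun y => Or.inr hκ.le)
  exact (Gl_cont hκ hz).sub (continuous_const.mul hc2).continuousOn

lemma lower_bound (hκ : 0 < κ) (hq : 0 < q) (hx : 0 < x)
    (hcond : ∀ a b, 0 < a → a < b → uu κ q a ≤ 0 → uu κ q b < 0) :
    Real.Gamma κ * (1 - Real.exp (-(q*x))) ^ κ < Gl κ x := by
  have h := lemA (f := phi κ q) (f' := phi' κ q)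
    (fun z hz => phi_contOn hκ hz)
    (phi_zero hκ) (phi_tendsto hκ hq)
    (fun y hy => hasDerivAt_phi hκ hq hy)
    (fun a b ha hab hfa => (phi'_neg_iff hκ hq (lt_trans ha hab)).1.2
      (hcond a b ha hab ((phi'_nonpos_iff hκ hq ha).1 hfa)))
    hx
  unfold phi at h
  linarith

lemma upper_bound (hκ : 0 < κ) (hq : 0 < q) (hx : 0 < x)
    (hcond : ∀ a b, 0 < a → a < b → 0 ≤ uu κ q a → 0 < uu κ q b) :
    Gl κ x < Real.Gamma κ * (1 - Real.exp (-(q*x))) ^ κ := by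
  have h := lemA (f := fun y => -phi κ q y) (f' := fun y => -phi' κ q y)
    (fun z hz => (phi_contOn hκ hz).neg)
    (by show -phi κ q 0 = 0; rw [phi_zero hκ, neg_zero]) (by simpa using (phi_tendsto hκ hq).neg)
    (fun y hy => (hasDerivAt_phi hκ hq hy).neg)
    (fun a b ha hab hfa => by
      simp only [neg_nonpos, neg_neg] at hfa ⊢
      have h2 : 0 ≤ uu κ q a := by
        by_contra hc
        push_neg at hc
        have := (phi'_neg_iff hκ hq ha).1.2 hc
        linarith
      have h3 := hcond a b ha hab h2
      rw [neg_lt, neg_zero]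
      exact (phi'_neg_iff hκ hq (lt_trans ha hab)).2.2 h3)
    hx
  simp only [neg_pos] at h
  unfold phi at h
  linarith

lemma cond_lower_lt_one (hκ0 : 0 < κ) (hκ : κ < 1) :
    ∀ a b, 0 < a → a < b → uu κ 1 a ≤ 0 → uu κ 1 b < 0 := by
  intro a b ha hab hua
  obtain ⟨d, hd, hd2⟩ := mvt_gen hab
    (fun t ht => hasDerivAt_uu one_pos (lt_of_lt_of_le ha ht.1))
  have hdpos : 0 < d := lt_trans ha hd.1
  have hU : UU κ 1 d < 0 := by
    have hH := Hpos one_pos hdpos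
    have : (κ-1) * (1/d - 1/(Real.exp (1*d) - 1)) < 0 :=
      mul_neg_of_neg_of_pos (by linarith) (by simpa using hH)
    unfold UU
    simpa using this
  nlinarith [hd.1, hd.2]

lemma cond_upper_gt_one (hκ : 1 < κ) :
    ∀ a b, 0 < a → a < b → 0 ≤ uu κ 1 a → 0 < uu κ 1 b := by
  intro a b ha hab hua
  obtain ⟨d, hd, hd2⟩ := mvt_gen hab
    (fun t ht => hasDerivAt_uu one_pos (lt_of_lt_of_le ha ht.1))
  have hdpos : 0 < d := lt_trans ha hd.1
  have hU : 0 < UU κ 1 d := by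
    have hH := Hpos one_pos hdpos
    have : 0 < (κ-1) * (1/d - 1/(Real.exp (1*d) - 1)) :=
      mul_pos (by linarith) (by simpa using hH)
    unfold UU
    simpa using this
  nlinarith [hd.1, hd.2]

lemma cond_lower_crit (hκ : 1 < κ) (hq : 0 < q)
    (hq1 : Real.Gamma (κ+1) * q ^ κ = 1) :
    ∀ a b, 0 < a → a < b → uu κ q a ≤ 0 → uu κ q b < 0 := by
  intro a b ha hab hua
  obtain ⟨c, hc, hc2⟩ := uu_eq_mul (by linarith) hq hq1 ha
  have hUc : UU κ q c ≤ 0 := by nlinarith [hc.1, hc.2]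
  obtain ⟨d, hd, hd2⟩ := mvt_gen hab
    (fun t ht => hasDerivAt_uu hq (lt_of_lt_of_le ha ht.1))
  have hcd : c < d := lt_trans hc.2 hd.1
  obtain ⟨e, he, he2⟩ := mvt_gen hcd
    (fun t ht => hasDerivAt_UU hq (lt_of_lt_of_le hc.1 ht.1))
  have hepos : 0 < e := lt_trans hc.1 he.1
  have hU' : UU' κ q e < 0 := by
    unfold UU'
    exact mul_neg_of_pos_of_neg (by linarith) (Hterm_neg hq hepos)
  have hUd : UU κ q d < UU κ q c := by nlinarith [he.1, he.2]
  nlinarith [hd.1, hd.2]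

lemma cond_upper_crit (hκ0 : 0 < κ) (hκ : κ < 1) (hq : 0 < q)
    (hq1 : Real.Gamma (κ+1) * q ^ κ = 1) :
    ∀ a b, 0 < a → a < b → 0 ≤ uu κ q a → 0 < uu κ q b := by
  intro a b ha hab hua
  obtain ⟨c, hc, hc2⟩ := uu_eq_mul hκ0 hq hq1 ha
  have hUc : 0 ≤ UU κ q c := by nlinarith [hc.1, hc.2]
  obtain ⟨d, hd, hd2⟩ := mvt_gen hab
    (fun t ht => hasDerivAt_uu hq (lt_of_lt_of_le ha ht.1))
  have hcd : c < d := lt_trans hc.2 hd.1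
  obtain ⟨e, he, he2⟩ := mvt_gen hcd
    (fun t ht => hasDerivAt_UU hq (lt_of_lt_of_le hc.1 ht.1))
  have hepos : 0 < e := lt_trans hc.1 he.1
  have hU' : 0 < UU' κ q e := by
    unfold UU'
    exact mul_pos_of_neg_of_neg (by linarith) (Hterm_neg hq hepos)
  have hUd : UU κ q c < UU κ q d := by nlinarith [he.1, he.2]
  nlinarith [hd.1, hd.2]

end AlzerAux

/-- Alzer's inequality bounding the normalized lower incomplete Gamma function. -/
theorem alzer_inequality (κ x p ptilde : ℝ) (hx : 0 < x) (hκ : 0 < κ) (hκ1 : κ ≠ 1)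
    (hp : p = if κ < 1 then 1 else (Real.Gamma (κ + 1)) ^ (-(1 : ℝ) / κ))
    (hpt : ptilde = if κ < 1 then (Real.Gamma (κ + 1)) ^ (-(1 : ℝ) / κ) else 1) :
    (1 - Real.exp (-(p * x))) ^ κ
      < (∫ t in (0 : ℝ)..x, t ^ (κ - 1) * Real.exp (-t)) / Real.Gamma κ ∧
    (∫ t in (0 : ℝ)..x, t ^ (κ - 1) * Real.exp (-t)) / Real.Gamma κ
      < (1 - Real.exp (-(ptilde * x))) ^ κ := by
  have hΓ : 0 < Real.Gamma κ := Real.Gamma_pos_of_pos hκ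
  have hΓ' : 0 < Real.Gamma (κ+1) := Real.Gamma_pos_of_pos (by linarith)
  set Q := (Real.Gamma (κ + 1)) ^ (-(1 : ℝ) / κ) with hQ
  have hQpos : 0 < Q := Real.rpow_pos_of_pos hΓ' _
  have hq1 : Real.Gamma (κ+1) * Q ^ κ = 1 := by
    rw [hQ, ← Real.rpow_mul hΓ'.le, div_mul_cancel₀ _ hκ.ne', Real.rpow_neg_one]
    exact mul_inv_cancel₀ hΓ'.ne' 
  have hGl : (∫ t in (0 : ℝ)..x, t ^ (κ - 1) * Real.exp (-t)) = Gl κ x := rfl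
  rw [hGl]
  rcases hκ1.lt_or_gt with hlt | hgt
  · rw [if_pos hlt] at hp
    rw [if_pos hlt] at hpt
    subst hp hpt
    constructor
    · have h := lower_bound hκ one_pos hx (cond_lower_lt_one hκ hlt)
      rw [lt_div_iff₀ hΓ]
      nlinarith
    · have h := upper_bound hκ hQpos hx (cond_upper_crit hκ hlt hQpos hq1)
      rw [div_lt_iff₀ hΓ]
      nlinarith
  · rw [if_neg (not_lt.2 hgt.le)] at hp
    rw [if_neg (not_lt.2 hgt.le)] at hpt
    subst hp hpt
    constructor
    · have h := lower_bound hκ hQpos hx (cond_lower_crit hgt hQpos hq1)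
      rw [lt_div_iff₀ hΓ]
      nlinarith
    · have h := upper_bound hκ one_pos hx (cond_upper_gt_one hgt)
      rw [div_lt_iff₀ hΓ]
      nlinarith
end

section
/- For constants c > 0, m ≥ 0, h > 0, 0 ≤ r < T, and s > 0, the integral (2/(T² − r²)) ∫_{√(r²+h²)}^{√(T²+h²)} u · exp(−s c u^{−2(m+3)}) du equals (c s)^{1/(m+3)} / ((m+3)(T² − r²)) · [Γ_u(−1/(m+3), c s (h²+T²)^{−(m+3)}) − Γ_u(−1/(m+3), c s (h²+r²)^{−(m+3)})]. -/
open Real MeasureTheory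

/-- Upper incomplete Gamma function Γ_u(z, x) = ∫_x^∞ t^{z-1} e^{-t} dt. -/
noncomputable def upperGamma (z x : ℝ) : ℝ :=
  ∫ t in Set.Ioi x, t ^ (z - 1) * Real.exp (-t)

lemma integrableOn_upperGamma (z x : ℝ) (hz : z ≤ 1) (hx : 0 < x) :
    IntegrableOn (fun t : ℝ => t ^ (z - 1) * Real.exp (-t)) (Set.Ioi x) := by
  have hbase : IntegrableOn (fun t : ℝ => x ^ (z - 1) * Real.exp (-t)) (Set.Ioi x) := by
    have h1 : IntegrableOn (fun t : ℝ => Real.exp (-(1:ℝ) * t)) (Set.Ioi x) :=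
      exp_neg_integrableOn_Ioi x one_pos
    simpa [IntegrableOn] using h1.const_mul (x ^ (z - 1))
  refine hbase.mono' ?_ ?_
  · refine ContinuousOn.aestronglyMeasurable ?_ measurableSet_Ioi
    exact (ContinuousOn.rpow_const continuousOn_id
      (fun t ht => Or.inl (ne_of_gt (hx.trans ht)))).mul
      (Real.continuous_exp.comp continuous_neg).continuousOn
  · filter_upwards [ae_restrict_mem measurableSet_Ioi] with t ht
    have ht0 : 0 < t := hx.trans ht
    have h1 : t ^ (z - 1) ≤ x ^ (z - 1) :=
      Real.rpow_le_rpow_of_nonpos hx (le_of_lt ht) (by linarith)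
    have h2 : (0:ℝ) ≤ t ^ (z - 1) := Real.rpow_nonneg ht0.le _
    rw [Real.norm_eq_abs, abs_of_nonneg (mul_nonneg h2 (Real.exp_pos _).le)]
    exact mul_le_mul_of_nonneg_right h1 (Real.exp_pos _).le

lemma upperGamma_sub (z a b : ℝ) (hz : z ≤ 1) (ha : 0 < a) (hab : a ≤ b) :
    upperGamma z a - upperGamma z b = ∫ t in a..b, t ^ (z - 1) * Real.exp (-t) := by
  have hb : 0 < b := lt_of_lt_of_le ha hab
  have hIa := integrableOn_upperGamma z a hz ha
  have hsplit : upperGamma z a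
      = (∫ t in Set.Ioc a b, t ^ (z - 1) * Real.exp (-t)) + upperGamma z b := by
    unfold upperGamma
    rw [← Set.Ioc_union_Ioi_eq_Ioi hab,
      setIntegral_union (Set.Ioc_disjoint_Ioi le_rfl) measurableSet_Ioi
        (hIa.mono_set (by rw [← Set.Ioc_union_Ioi_eq_Ioi hab]; exact Set.subset_union_left))
        (integrableOn_upperGamma z b hz hb)]
  rw [intervalIntegral.integral_of_le hab]
  linarith [hsplit]

/-- Conditional Laplace transform of a single VLC interferer: closed form in terms
of the (generalized) upper incomplete Gamma function. -/
theorem vlc_interferer_laplace (c m h r T s : ℝ)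
    (hc : 0 < c) (hm : 0 ≤ m) (hh : 0 < h) (hr : 0 ≤ r) (hrT : r < T) (hs : 0 < s) :
    (2 / (T ^ 2 - r ^ 2)) *
        ∫ u in Real.sqrt (r ^ 2 + h ^ 2)..Real.sqrt (T ^ 2 + h ^ 2),
          u * Real.exp (-(s * c * u ^ (-(2 * (m + 3)))))
      = (c * s) ^ ((1 : ℝ) / (m + 3)) / ((m + 3) * (T ^ 2 - r ^ 2)) *
          (upperGamma (-(1 / (m + 3))) (c * s * (h ^ 2 + T ^ 2) ^ (-(m + 3)))
            - upperGamma (-(1 / (m + 3))) (c * s * (h ^ 2 + r ^ 2) ^ (-(m + 3)))) := by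
  set k : ℝ := m + 3 with hk
  have hk0 : 0 < k := by positivity
  set p : ℝ := -(2 * k) with hp
  set z : ℝ := -(1 / k) with hz
  set a : ℝ := Real.sqrt (r ^ 2 + h ^ 2) with ha
  set b : ℝ := Real.sqrt (T ^ 2 + h ^ 2) with hb
  have hcs : 0 < c * s := mul_pos hc hs
  have hra : (0:ℝ) < r ^ 2 + h ^ 2 := by positivity
  have hTb : (0:ℝ) < T ^ 2 + h ^ 2 := by positivity
  have ha0 : 0 < a := Real.sqrt_pos.mpr hra
  have hab : a ≤ b := Real.sqrt_le_sqrt (by nlinarith)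
  have hb0 : 0 < b := lt_of_lt_of_le ha0 hab
  set f : ℝ → ℝ := fun u => c * s * u ^ p with hf
  set f' : ℝ → ℝ := fun u => c * s * (p * u ^ (p - 1)) with hf'
  set g : ℝ → ℝ := fun t => t ^ (z - 1) * Real.exp (-t) with hg
  have huIcc : Set.uIcc a b = Set.Icc a b := Set.uIcc_of_le hab
  -- positivity on the interval
  have hpos : ∀ u ∈ Set.uIcc a b, 0 < u := by
    intro u hu
    rw [huIcc] at hu
    exact lt_of_lt_of_le ha0 hu.1
  -- derivative
  have hderiv : ∀ u ∈ Set.uIcc a b, HasDerivAt f (f' u) u := by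
    intro u hu
    exact ((Real.hasDerivAt_rpow_const (Or.inl (hpos u hu).ne')).const_mul (c * s))
  have hcont : ContinuousOn f' (Set.uIcc a b) := by
    apply ContinuousOn.mul continuousOn_const
    apply ContinuousOn.mul continuousOn_const
    exact ContinuousOn.rpow_const continuousOn_id (fun u hu => Or.inl (hpos u hu).ne')
  have hgcont : ContinuousOn g (f '' Set.uIcc a b) := by
    have hsub : f '' Set.uIcc a b ⊆ Set.Ioi 0 := by
      rintro _ ⟨u, hu, rfl⟩
      exact mul_pos hcs (Real.rpow_pos_of_pos (hpos u hu) _)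
    refine ContinuousOn.mono ?_ hsub
    exact (ContinuousOn.rpow_const continuousOn_id
      (fun t ht => Or.inl (ne_of_gt ht))).mul
      (Real.continuous_exp.comp continuous_neg).continuousOn
  set K : ℝ := -(c * s) ^ ((1:ℝ) / k) / (2 * k) with hK
  -- pointwise identity
  have key : Set.EqOn (fun u => u * Real.exp (-(s * c * u ^ (-(2 * (m + 3))))))
      (fun u => K * (f' u • (g ∘ f) u)) (Set.uIcc a b) := by
    intro u hu
    have hu0 : 0 < u := hpos u hu
    simp only [smul_eq_mul, Function.comp_apply, hf', hg, hf]
    have hup : 0 < u ^ p := Real.rpow_pos_of_pos hu0 _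
    have e1 : (c * s * u ^ p) ^ (z - 1) = (c * s) ^ (z - 1) * (u ^ p) ^ (z - 1) :=
      Real.mul_rpow hcs.le hup.le
    have e2 : (u ^ p) ^ (z - 1) = u ^ (p * (z - 1)) :=
      (Real.rpow_mul hu0.le p (z - 1)).symm
    have e3 : u ^ (p - 1) * u ^ (p * (z - 1)) = u ^ (p - 1 + p * (z - 1)) :=
      (Real.rpow_add hu0 _ _).symm
    have e4 : p - 1 + p * (z - 1) = 1 := by
      field_simp [hp, hz]
      rw [hp, hz]; linear_combination 2 * mul_one_div_cancel hk0.ne'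
    have e5 : K * (c * s) ^ (z - 1) * (c * s) = -(1 / (2 * k)) * (c * s) ^ ((1:ℝ)/k + (z - 1) + 1) := by
      rw [Real.rpow_add hcs, Real.rpow_add hcs, Real.rpow_one, hK]
      ring
    have e6 : (1:ℝ)/k + (z - 1) + 1 = 0 := by
      field_simp [hz]
      rw [hz]; linear_combination (-1 : ℝ) * mul_one_div_cancel hk0.ne'
    have e7 : -(s * c * u ^ (-(2 * (m + 3)))) = -(c * s * u ^ p) := by
      rw [hp, hk]; ring_nf
    rw [e7, e1, e2]
    have : u ^ (p-1) * u ^ (p * (z-1)) = u := by rw [e3, e4, Real.rpow_one]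
    calc u * Real.exp (-(c * s * u ^ p))
        = (K * (c * s) ^ (z - 1) * (c * s) * p) * (u ^ (p-1) * u ^ (p * (z-1))) *
            Real.exp (-(c * s * u ^ p)) := by
          rw [this, e5, e6, Real.rpow_zero, hp]
          have hk0' : k ≠ 0 := ne_of_gt hk0
          field_simp
      _ = K * (c * s * (p * u ^ (p - 1)) * ((c * s) ^ (z - 1) * u ^ (p * (z-1)) *
            Real.exp (-(c * s * u ^ p)))) := by ring
  rw [intervalIntegral.integral_congr key]
  simp only [intervalIntegral.integral_const_mul]
  rw [intervalIntegral.integral_comp_smul_deriv' hderiv hcont hgcont]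
  -- compute f a, f b
  have hap : a ^ p = (r ^ 2 + h ^ 2) ^ (-k) := by
    rw [ha, Real.sqrt_eq_rpow, ← Real.rpow_mul hra.le]
    congr 1
    rw [hp]; ring
  have hbp : b ^ p = (T ^ 2 + h ^ 2) ^ (-k) := by
    rw [hb, Real.sqrt_eq_rpow, ← Real.rpow_mul hTb.le]
    congr 1
    rw [hp]; ring
  have hfa : f a = c * s * (h ^ 2 + r ^ 2) ^ (-k) := by
    rw [hf]; simp only [hap]; rw [add_comm (r^2) (h^2)]
  have hfb : f b = c * s * (h ^ 2 + T ^ 2) ^ (-k) := by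
    rw [hf]; simp only [hbp]; rw [add_comm (T^2) (h^2)]
  have hfb0 : 0 < f b := by
    rw [hfb]
    exact mul_pos hcs (Real.rpow_pos_of_pos (by nlinarith) _)
  have hfba : f b ≤ f a := by
    rw [hf]
    have : b ^ p ≤ a ^ p :=
      Real.rpow_le_rpow_of_nonpos ha0 hab (by rw [hp]; nlinarith)
    exact mul_le_mul_of_nonneg_left this hcs.le
  have hzle : z ≤ 1 := by
    rw [hz]
    have : 0 < 1 / k := by positivity
    linarith
  have hgam : upperGamma z (f b) - upperGamma z (f a) = ∫ t in f b..f a, g t :=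
    upperGamma_sub z (f b) (f a) hzle hfb0 hfba
  have hT2 : 0 < T ^ 2 - r ^ 2 := by nlinarith
  have hint : (∫ t in f a..f b, g t) = -(upperGamma z (f b) - upperGamma z (f a)) := by
    rw [intervalIntegral.integral_symm (f a) (f b)] at hgam
    linarith
  rw [hint, hfa, hfb]
  have hzeq : z = -(1 / (m + 3)) := by rw [hz, hk]
  have hkeq : (-k) = -(m+3) := by rw [hk]
  rw [hzeq, hkeq]
  rw [hK, hk]
  have h1 : (0:ℝ) < m + 3 := hk0
  field_simp
end

section
/- Let X and Y be nonnegative random variables (possibly dependent). Then E[ln(1 + X/(1 + Y))] = ∫_0^∞ (E[e^{-sY}] − E[e^{-s(X+Y)}]) · e^{-s}/s ds. -/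
open Real MeasureTheory ProbabilityTheory

open Set

lemma integral_Ioc_exp {s : ℝ} (hs : 0 < s) {c d : ℝ} (hcd : c ≤ d) :
    ∫ t in Set.Ioc c d, Real.exp (-(t*s))
      = (Real.exp (-(c*s)) - Real.exp (-(d*s))) / s := by
  rw [← intervalIntegral.integral_of_le hcd]
  have key : ∀ t : ℝ, HasDerivAt (fun u => -(Real.exp (-(u*s))/s)) (Real.exp (-(t*s))) t := by
    intro t
    have h1 : HasDerivAt (fun u : ℝ => -(u*s)) (-s) t := by
      have h := ((hasDerivAt_id t).mul_const s).neg
      simp only [one_mul] at h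
      exact h
    have h2 := (h1.exp.div_const s).neg
    rw [mul_neg, neg_div, neg_neg, mul_div_cancel_right₀ _ hs.ne'] at h2
    exact h2
  rw [intervalIntegral.integral_eq_sub_of_hasDerivAt (fun t _ => key t)
    ((Real.continuous_exp.comp (by continuity)).intervalIntegrable c d)]
  ring

lemma lint_frullani {c d : ℝ} (hc : 0 < c) (hcd : c ≤ d) :
    ∫⁻ s in Set.Ioi (0:ℝ), ENNReal.ofReal ((Real.exp (-(c*s)) - Real.exp (-(d*s))) / s)
      = ENNReal.ofReal (Real.log (d/c)) := by
  have hd : 0 < d := lt_of_lt_of_le hc hcd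
  have step1 : ∀ s ∈ Set.Ioi (0:ℝ),
      ENNReal.ofReal ((Real.exp (-(c*s)) - Real.exp (-(d*s))) / s)
        = ∫⁻ t in Set.Ioc c d, ENNReal.ofReal (Real.exp (-(t*s))) := by
    intro s hs
    rw [← integral_Ioc_exp hs hcd,
      MeasureTheory.ofReal_integral_eq_lintegral_ofReal]
    · exact (Real.continuous_exp.comp (by continuity)).integrableOn_Ioc
    · exact Filter.Eventually.of_forall fun t => (Real.exp_pos _).le
  rw [setLIntegral_congr_fun measurableSet_Ioi step1]
  have hmeas : Measurable (Function.uncurry fun (s t : ℝ) => ENNReal.ofReal (Real.exp (-(t*s)))) := by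
    apply ENNReal.measurable_ofReal.comp
    exact (Real.continuous_exp.comp (by continuity)).measurable
  rw [lintegral_lintegral_swap hmeas.aemeasurable]
  have step3 : ∀ t ∈ Set.Ioc c d,
      ∫⁻ s in Set.Ioi (0:ℝ), ENNReal.ofReal (Real.exp (-(t*s))) = ENNReal.ofReal (1/t) := by
    intro t ht
    have ht0 : 0 < t := hc.trans ht.1
    have hInt : IntegrableOn (fun s => Real.exp (-(t*s))) (Set.Ioi (0:ℝ)) := by
      simpa [neg_mul] using exp_neg_integrableOn_Ioi 0 ht0
    rw [← MeasureTheory.ofReal_integral_eq_lintegral_ofReal hInt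
      (Filter.Eventually.of_forall fun s => (Real.exp_pos _).le)]
    congr 1
    have := integral_comp_mul_left_Ioi (fun x => Real.exp (-x)) 0 ht0
    simp only [mul_zero, smul_eq_mul] at this
    rw [this, integral_exp_neg_Ioi_zero]
    simp [one_div]
  rw [setLIntegral_congr_fun measurableSet_Ioc step3]
  rw [← MeasureTheory.ofReal_integral_eq_lintegral_ofReal]
  · congr 1
    rw [← intervalIntegral.integral_of_le hcd, integral_one_div]
    rw [Set.uIcc_of_le hcd]
    rintro ⟨h1, h2⟩
    linarith
  · have h1 : IntervalIntegrable (fun t : ℝ => 1/t) volume c d :=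
      intervalIntegral.intervalIntegrable_one_div
        (fun t ht => by rw [Set.uIcc_of_le hcd] at ht; exact ne_of_gt (lt_of_lt_of_le hc ht.1))
        continuousOn_id
    exact (intervalIntegrable_iff_integrableOn_Ioc_of_le hcd).mp h1
  · exact ae_restrict_of_forall_mem measurableSet_Ioc
      (fun t ht => one_div_nonneg.mpr (le_of_lt (hc.trans ht.1)))

lemma frullani_nonneg {c d : ℝ} (hcd : c ≤ d) {s : ℝ} (hs : s ∈ Set.Ioi (0:ℝ)) :
    0 ≤ (Real.exp (-(c*s)) - Real.exp (-(d*s))) / s := by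
  apply div_nonneg _ (le_of_lt hs)
  have : -(d*s) ≤ -(c*s) := by nlinarith [mem_Ioi.mp hs]
  simpa using Real.exp_le_exp.mpr this

lemma frullani_integrableOn {c d : ℝ} (hc : 0 < c) (hcd : c ≤ d) :
    IntegrableOn (fun s => (Real.exp (-(c*s)) - Real.exp (-(d*s))) / s) (Set.Ioi (0:ℝ)) := by
  have hm : AEStronglyMeasurable (fun s => (Real.exp (-(c*s)) - Real.exp (-(d*s))) / s)
      (volume.restrict (Set.Ioi (0:ℝ))) := by
    apply Measurable.aestronglyMeasurable
    exact (((measurable_const.mul measurable_id).neg.exp.sub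
      (measurable_const.mul measurable_id).neg.exp).div measurable_id)
  refine ⟨hm, ?_⟩
  rw [hasFiniteIntegral_iff_ofReal (ae_restrict_of_forall_mem measurableSet_Ioi
    (fun s hs => frullani_nonneg hcd hs))]
  rw [lint_frullani hc hcd]
  exact ENNReal.ofReal_lt_top

lemma frullani_integral {c d : ℝ} (hc : 0 < c) (hcd : c ≤ d) :
    ∫ s in Set.Ioi (0:ℝ), (Real.exp (-(c*s)) - Real.exp (-(d*s))) / s = Real.log (d/c) := by
  rw [MeasureTheory.integral_eq_lintegral_of_nonneg_ae
    (ae_restrict_of_forall_mem measurableSet_Ioi (fun s hs => frullani_nonneg hcd hs))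
    (frullani_integrableOn hc hcd).1]
  rw [lint_frullani hc hcd, ENNReal.toReal_ofReal]
  exact Real.log_nonneg ((one_le_div hc).mpr hcd)

/-- Hamdi's lemma: for nonnegative random variables X (signal) and Y (interference),
E[ln(1 + X/(1+Y))] = ∫_0^∞ (E[e^{-sY}] − E[e^{-s(X+Y)}]) e^{-s}/s ds. -/
theorem hamdi_lemma {Ω : Type*} [MeasureSpace Ω] [IsProbabilityMeasure (ℙ : Measure Ω)]
    (X Y : Ω → ℝ) (hX : Measurable X) (hY : Measurable Y)
    (hXnn : ∀ ω, 0 ≤ X ω) (hYnn : ∀ ω, 0 ≤ Y ω)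
    (hint : Integrable (fun ω => Real.log (1 + X ω / (1 + Y ω))))
    (hLY : ∀ s > (0 : ℝ), Integrable (fun ω => Real.exp (-(s * Y ω))))
    (hLXY : ∀ s > (0 : ℝ), Integrable (fun ω => Real.exp (-(s * (X ω + Y ω))))) :
    ∫ ω, Real.log (1 + X ω / (1 + Y ω))
      = ∫ s in Set.Ioi (0 : ℝ),
          ((∫ ω, Real.exp (-(s * Y ω))) - ∫ ω, Real.exp (-(s * (X ω + Y ω))))
            * Real.exp (-s) / s := by
  -- abbreviations
  set g : Ω → ℝ → ℝ := fun ω s =>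
    (Real.exp (-(s * Y ω)) - Real.exp (-(s * (X ω + Y ω)))) * Real.exp (-s) / s with hg
  have hY1 : ∀ ω, (0:ℝ) < 1 + Y ω := fun ω => by linarith [hYnn ω]
  have hcd : ∀ ω, 1 + Y ω ≤ 1 + (X ω + Y ω) := fun ω => by linarith [hXnn ω]
  -- pointwise rewriting of g into the Frullani form
  have hgeq : ∀ ω s,
      g ω s = (Real.exp (-((1 + Y ω) * s)) - Real.exp (-((1 + (X ω + Y ω)) * s))) / s := by
    intro ω s
    rw [hg]
    simp only
    rw [sub_mul, ← Real.exp_add, ← Real.exp_add]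
    congr 2 <;> ring
  -- nonnegativity of log term
  have hfnn : ∀ ω, 0 ≤ Real.log (1 + X ω / (1 + Y ω)) := fun ω =>
    Real.log_nonneg (by nlinarith [div_nonneg (hXnn ω) (hY1 ω).le])
  have hfm : Measurable fun ω => Real.log (1 + X ω / (1 + Y ω)) :=
    (measurable_const.add (hX.div (measurable_const.add hY))).log
  -- pointwise Frullani over each ω
  have hpt : ∀ ω, ENNReal.ofReal (Real.log (1 + X ω / (1 + Y ω)))
      = ∫⁻ s in Set.Ioi (0:ℝ), ENNReal.ofReal (g ω s) := by
    intro ω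
    have h1 : 1 + X ω / (1 + Y ω) = (1 + (X ω + Y ω)) / (1 + Y ω) := by
      have h2 : (1:ℝ) + (X ω + Y ω) = (1 + Y ω) + X ω := by ring
      rw [h2, add_div, div_self (hY1 ω).ne']
    rw [h1, ← lint_frullani (hY1 ω) (hcd ω)]
    refine setLIntegral_congr_fun measurableSet_Ioi ?_
    intro s hs
    beta_reduce
    rw [hgeq ω s]
  -- measurability of the uncurried integrand
  have hgm : Measurable (Function.uncurry fun (s : ℝ) (ω : Ω) => ENNReal.ofReal (g ω s)) := by
    apply ENNReal.measurable_ofReal.comp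
    simp only [hg, Function.uncurry]
    exact (((measurable_fst.mul (hY.comp measurable_snd)).neg.exp.sub
      (measurable_fst.mul ((hX.comp measurable_snd).add (hY.comp measurable_snd))).neg.exp).mul
      measurable_fst.neg.exp).div measurable_fst
  -- inner Ω-integral for fixed s > 0
  have hginteg : ∀ s, 0 < s → Integrable (fun ω => g ω s) := by
    intro s hs
    exact (((hLY s hs).sub (hLXY s hs)).mul_const (Real.exp (-s))).div_const s
  have hgnn : ∀ s, 0 < s → ∀ ω, 0 ≤ g ω s := by
    intro s hs ω
    rw [hgeq ω s]
    exact frullani_nonneg (hcd ω) (mem_Ioi.mpr hs)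
  have hinner : ∀ s ∈ Set.Ioi (0:ℝ),
      ∫⁻ ω, ENNReal.ofReal (g ω s)
        = ENNReal.ofReal (((∫ ω, Real.exp (-(s * Y ω))) - ∫ ω, Real.exp (-(s * (X ω + Y ω))))
            * Real.exp (-s) / s) := by
    intro s hs
    rw [← MeasureTheory.ofReal_integral_eq_lintegral_ofReal (hginteg s hs)
      (Filter.Eventually.of_forall (hgnn s hs))]
    congr 1
    simp only [hg]
    rw [integral_div, integral_mul_const, integral_sub (hLY s hs) (hLXY s hs)]
  -- measurability of the s-integrand
  have hsm : AEStronglyMeasurable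
      (fun s => ((∫ ω, Real.exp (-(s * Y ω))) - ∫ ω, Real.exp (-(s * (X ω + Y ω))))
          * Real.exp (-s) / s) (volume.restrict (Set.Ioi (0:ℝ))) := by
    apply AEStronglyMeasurable.restrict
    apply Measurable.aestronglyMeasurable
    have m1 : StronglyMeasurable fun s : ℝ => ∫ ω, Real.exp (-(s * Y ω)) := by
      apply MeasureTheory.StronglyMeasurable.integral_prod_right'
        (f := fun p : ℝ × Ω => Real.exp (-(p.1 * Y p.2)))
      exact ((measurable_fst.mul (hY.comp measurable_snd)).neg.exp).stronglyMeasurable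
    have m2 : StronglyMeasurable fun s : ℝ => ∫ ω, Real.exp (-(s * (X ω + Y ω))) := by
      apply MeasureTheory.StronglyMeasurable.integral_prod_right'
        (f := fun p : ℝ × Ω => Real.exp (-(p.1 * (X p.2 + Y p.2))))
      exact ((measurable_fst.mul
        ((hX.comp measurable_snd).add (hY.comp measurable_snd))).neg.exp).stronglyMeasurable
    exact (((m1.measurable.sub m2.measurable).mul measurable_id.neg.exp).div measurable_id)
  -- nonnegativity of the s-integrand
  have hsnn : ∀ s ∈ Set.Ioi (0:ℝ),
      0 ≤ ((∫ ω, Real.exp (-(s * Y ω))) - ∫ ω, Real.exp (-(s * (X ω + Y ω))))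
          * Real.exp (-s) / s := by
    intro s hs
    rw [mem_Ioi] at hs
    apply div_nonneg _ hs.le
    apply mul_nonneg _ (Real.exp_pos _).le
    rw [sub_nonneg]
    apply integral_mono (hLXY s hs) (hLY s hs)
    intro ω
    apply Real.exp_le_exp.mpr
    have := hXnn ω
    nlinarith
  -- now put it together
  rw [MeasureTheory.integral_eq_lintegral_of_nonneg_ae
    (Filter.Eventually.of_forall hfnn) hfm.aestronglyMeasurable,
    MeasureTheory.integral_eq_lintegral_of_nonneg_ae
    (ae_restrict_of_forall_mem measurableSet_Ioi hsnn) hsm]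
  congr 1
  calc ∫⁻ ω, ENNReal.ofReal (Real.log (1 + X ω / (1 + Y ω)))
      = ∫⁻ ω, ∫⁻ s in Set.Ioi (0:ℝ), ENNReal.ofReal (g ω s) := by
        exact lintegral_congr hpt
    _ = ∫⁻ s in Set.Ioi (0:ℝ), ∫⁻ ω, ENNReal.ofReal (g ω s) := by
        exact (lintegral_lintegral_swap hgm.aemeasurable).symm
    _ = ∫⁻ s in Set.Ioi (0:ℝ),
          ENNReal.ofReal (((∫ ω, Real.exp (-(s * Y ω))) - ∫ ω, Real.exp (-(s * (X ω + Y ω))))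
            * Real.exp (-s) / s) := by
        exact setLIntegral_congr_fun measurableSet_Ioi hinner
end
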